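/- Let V be a finite-dimensional vector space over ℚ and A : V → V linear. Then in ℚ[[t]], t · d/dt (log det(1 - tA)) = -Tr(tA(1 - tA)^{-1}), i.e., t · (det(1 - tA))' / det(1 - tA) = -Σ_{k≥1} Tr(A^k) t^k. -/

import Mathlib

open PowerSeries Matrix Polynomial Finset

lemma polyDerivFinsetProd' {ι : Type*} [DecidableEq ι] (s : Finset ι) (f : ι → ℚ[X]) :
    Polynomial.derivative (∏ i ∈ s, f i) =
      ∑ i ∈ s, (∏ j ∈ s.erase i, f j) * Polynomial.derivative (f i) := by
  rw [Finset.prod_eq_multiset_prod, Polynomial.derivative_prod, Finset.sum_eq_multiset_sum]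
  simp only [Finset.prod_eq_multiset_prod, Finset.erase_val]

lemma deriv_det' {m : ℕ} (M : Matrix (Fin m) (Fin m) ℚ[X]) :
    Polynomial.derivative M.det =
      ∑ j, (M.updateCol j fun i => Polynomial.derivative (M i j)).det := by
  simp_rw [Matrix.det_apply]
  rw [map_sum, Finset.sum_comm]
  refine Finset.sum_congr rfl fun σ _ => ?_
  simp_rw [Units.smul_def]
  rw [map_zsmul, polyDerivFinsetProd', smul_sum]
  refine Finset.sum_congr rfl fun j _ => ?_
  congr 1
  rw [← Finset.mul_prod_erase univ _ (mem_univ j), Matrix.updateCol_self, mul_comm]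
  congr 1
  exact Finset.prod_congr rfl fun i hi =>
    (Matrix.updateCol_ne (Finset.ne_of_mem_erase hi)).symm

lemma deriv_det_poly {m : ℕ} (A : Matrix (Fin m) (Fin m) ℚ) :
    Polynomial.derivative
        (Matrix.det ((1 : Matrix (Fin m) (Fin m) ℚ[X]) - (Polynomial.X : ℚ[X]) • A.map Polynomial.C)) =
      -Matrix.trace (Matrix.adjugate ((1 : Matrix (Fin m) (Fin m) ℚ[X]) -
          (Polynomial.X : ℚ[X]) • A.map Polynomial.C) * A.map Polynomial.C) := by
  set M := (1 : Matrix (Fin m) (Fin m) ℚ[X]) - (Polynomial.X : ℚ[X]) • A.map Polynomial.C with hM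
  have hent : ∀ i j, Polynomial.derivative (M i j) = -(Polynomial.C (A i j)) := by
    intro i j
    rw [hM]
    simp only [Matrix.sub_apply, Matrix.smul_apply, Matrix.map_apply, smul_eq_mul,
      Matrix.one_apply]
    split_ifs <;> simp
  rw [deriv_det']
  have : ∀ j, ((M.updateCol j fun i => Polynomial.derivative (M i j)).det)
      = -((Matrix.adjugate M *ᵥ fun i => Polynomial.C (A i j)) j) := by
    intro j
    simp_rw [hent]
    rw [← Matrix.cramer_apply]
    have : (fun i => -(Polynomial.C (A i j))) = -(fun i => Polynomial.C (A i j)) := rfl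
    rw [this, map_neg, ← Matrix.cramer_eq_adjugate_mulVec]
    rfl
  rw [Finset.sum_congr rfl fun j _ => this j, Finset.sum_neg_distrib, neg_inj]
  simp [Matrix.trace, Matrix.mul_apply, Matrix.mulVec, dotProduct, Matrix.map_apply,
    Matrix.diag]

noncomputable def Smat {m : ℕ} (A : Matrix (Fin m) (Fin m) ℚ) :
    Matrix (Fin m) (Fin m) (PowerSeries ℚ) :=
  Matrix.of fun i j => PowerSeries.mk fun n => (A ^ n) i j

lemma one_sub_mul_Smat {m : ℕ} (A : Matrix (Fin m) (Fin m) ℚ) :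
    ((1 : Matrix (Fin m) (Fin m) (PowerSeries ℚ)) - (PowerSeries.X : PowerSeries ℚ) • A.map (PowerSeries.C (R := ℚ))) * Smat A = 1 := by
  ext i j n
  rw [Matrix.mul_apply]
  simp only [Matrix.sub_apply, Matrix.smul_apply, Matrix.map_apply, sub_mul, smul_eq_mul]
  rw [Finset.sum_sub_distrib]
  rw [map_sub, map_sum, map_sum]
  have h1 : ∀ x, PowerSeries.coeff n ((1 : Matrix (Fin m) (Fin m) (PowerSeries ℚ)) i x * Smat A x j)
      = if x = i then (A ^ n) x j else 0 := by
    intro x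
    rw [Matrix.one_apply]
    split_ifs with h h2 h2
    · rw [one_mul, Smat]; simp
    · exact absurd h.symm h2
    · exact absurd h2.symm h
    · rw [zero_mul, map_zero]
  rw [Finset.sum_congr rfl fun x _ => h1 x, Finset.sum_ite_eq' univ i (fun x => (A ^ n) x j)]
  simp only [mem_univ, if_true]
  cases n with
  | zero =>
    simp only [pow_zero]
    have : ∀ x, PowerSeries.coeff 0 ((PowerSeries.X : PowerSeries ℚ) * PowerSeries.C (R := ℚ) (A i x) * Smat A x j) = 0 := by
      intro x
      rw [mul_assoc, PowerSeries.coeff_zero_eq_constantCoeff, _root_.map_mul]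
      simp
    rw [Finset.sum_congr rfl fun x _ => this x]
    simp [Matrix.one_apply, PowerSeries.coeff_one, Matrix.one_apply]
  | succ n =>
    have : ∀ x, PowerSeries.coeff (n+1) ((PowerSeries.X : PowerSeries ℚ) * PowerSeries.C (R := ℚ) (A i x) * Smat A x j)
        = A i x * (A ^ n) x j := by
      intro x
      rw [mul_assoc, PowerSeries.coeff_succ_X_mul, PowerSeries.coeff_C_mul]
      rw [Smat]; simp
    rw [Finset.sum_congr rfl fun x _ => this x]
    have : (A ^ (n+1)) i j - ∑ x, A i x * (A ^ n) x j = 0 := by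
      rw [pow_succ']
      rw [Matrix.mul_apply]
      ring
    rw [this]
    simp only [Matrix.one_apply]
    split_ifs with h
    · rw [PowerSeries.coeff_one]; simp
    · simp

lemma adjugate_eq {m : ℕ} (A : Matrix (Fin m) (Fin m) ℚ) :
    Matrix.adjugate ((1 : Matrix (Fin m) (Fin m) (PowerSeries ℚ)) -
        (PowerSeries.X : PowerSeries ℚ) • A.map (PowerSeries.C (R := ℚ))) =
      Matrix.det ((1 : Matrix (Fin m) (Fin m) (PowerSeries ℚ)) -
        (PowerSeries.X : PowerSeries ℚ) • A.map (PowerSeries.C (R := ℚ))) • Smat A := by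
  set M := (1 : Matrix (Fin m) (Fin m) (PowerSeries ℚ)) -
    (PowerSeries.X : PowerSeries ℚ) • A.map (PowerSeries.C (R := ℚ))
  have h2 : Smat A * M = 1 := mul_eq_one_comm.mp (one_sub_mul_Smat A)
  calc adjugate M = (Smat A * M) * adjugate M := by rw [h2, one_mul]
    _ = Smat A * (M * adjugate M) := by rw [Matrix.mul_assoc]
    _ = Smat A * (M.det • 1) := by rw [Matrix.mul_adjugate]
    _ = M.det • Smat A := by rw [Matrix.mul_smul, Matrix.mul_one]

lemma trace_eq {m : ℕ} (A : Matrix (Fin m) (Fin m) ℚ) :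
    (PowerSeries.X : PowerSeries ℚ) * Matrix.trace (Smat A * A.map (PowerSeries.C (R := ℚ))) =
      PowerSeries.mk fun k => if k = 0 then 0 else Matrix.trace (A ^ k) := by
  ext n
  rw [Matrix.trace]
  cases n with
  | zero =>
    rw [PowerSeries.coeff_zero_eq_constantCoeff, _root_.map_mul]
    simp
  | succ n =>
    rw [PowerSeries.coeff_succ_X_mul, PowerSeries.coeff_mk, if_neg (Nat.succ_ne_zero n)]
    rw [map_sum]
    have : ∀ i, PowerSeries.coeff n (Matrix.diag (Smat A * A.map (PowerSeries.C (R := ℚ))) i)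
        = (A ^ (n+1)) i i := by
      intro i
      rw [Matrix.diag_apply, Matrix.mul_apply, map_sum]
      have : ∀ x, PowerSeries.coeff n (Smat A i x * (A.map (PowerSeries.C (R := ℚ))) x i)
          = (A ^ n) i x * A x i := by
        intro x
        rw [mul_comm, Matrix.map_apply, PowerSeries.coeff_C_mul, Smat]
        simp [mul_comm]
      rw [Finset.sum_congr rfl fun x _ => this x, pow_succ, Matrix.mul_apply]
    rw [Finset.sum_congr rfl fun i _ => this i, Matrix.trace]
    rfl

lemma map_poly_mat {m : ℕ} (A : Matrix (Fin m) (Fin m) ℚ) :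
    ((1 : Matrix (Fin m) (Fin m) ℚ[X]) - (Polynomial.X : ℚ[X]) • A.map Polynomial.C).map
        (Polynomial.coeToPowerSeries.ringHom (R := ℚ)) =
      (1 : Matrix (Fin m) (Fin m) (PowerSeries ℚ)) -
        (PowerSeries.X : PowerSeries ℚ) • A.map (PowerSeries.C (R := ℚ)) := by
  ext i j
  simp only [Matrix.map_apply, Matrix.sub_apply, Matrix.smul_apply, Matrix.one_apply,
    smul_eq_mul, map_sub, _root_.map_mul, apply_ite (Polynomial.coeToPowerSeries.ringHom (R := ℚ)),
    _root_.map_one, map_zero, Polynomial.coeToPowerSeries.ringHom_apply, Polynomial.coe_X,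
    Polynomial.coe_C]

lemma deriv_D {m : ℕ} (A : Matrix (Fin m) (Fin m) ℚ) :
    PowerSeries.derivative ℚ (Matrix.det ((1 : Matrix (Fin m) (Fin m) (PowerSeries ℚ)) -
        (PowerSeries.X : PowerSeries ℚ) • A.map (PowerSeries.C (R := ℚ)))) =
      -Matrix.trace (Matrix.adjugate ((1 : Matrix (Fin m) (Fin m) (PowerSeries ℚ)) -
          (PowerSeries.X : PowerSeries ℚ) • A.map (PowerSeries.C (R := ℚ))) * A.map (PowerSeries.C (R := ℚ))) := by
  rw [← map_poly_mat A, ← RingHom.mapMatrix_apply, ← RingHom.map_det]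
  rw [Polynomial.coeToPowerSeries.ringHom_apply, PowerSeries.derivative_coe, deriv_det_poly]
  rw [← Polynomial.coeToPowerSeries.ringHom_apply (R := ℚ), map_neg]
  congr 1
  have htr : ∀ (N : Matrix (Fin m) (Fin m) ℚ[X]),
      Polynomial.coeToPowerSeries.ringHom (R := ℚ) N.trace =
        (N.map (Polynomial.coeToPowerSeries.ringHom (R := ℚ))).trace := by
    intro N
    simp [Matrix.trace, map_sum, Matrix.map_apply, Matrix.diag]
  rw [htr, Matrix.map_mul, ← RingHom.mapMatrix_apply, RingHom.map_adjugate,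
    RingHom.mapMatrix_apply]
  congr 2
  ext i j
  simp only [Matrix.map_apply, Function.comp_apply, Polynomial.coeToPowerSeries.ringHom_apply,
    Polynomial.coe_C]

lemma constCoeff_det {m : ℕ} (A : Matrix (Fin m) (Fin m) ℚ) :
    PowerSeries.constantCoeff (R := ℚ) (Matrix.det ((1 : Matrix (Fin m) (Fin m) (PowerSeries ℚ)) -
        (PowerSeries.X : PowerSeries ℚ) • A.map (PowerSeries.C (R := ℚ)))) = 1 := by
  rw [RingHom.map_det, RingHom.mapMatrix_apply]
  have : ((1 : Matrix (Fin m) (Fin m) (PowerSeries ℚ)) -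
      (PowerSeries.X : PowerSeries ℚ) • A.map (PowerSeries.C (R := ℚ))).map
        (PowerSeries.constantCoeff (R := ℚ)) = 1 := by
    ext i j
    simp [Matrix.map_apply, Matrix.sub_apply, Matrix.smul_apply, Matrix.one_apply,
      apply_ite (PowerSeries.constantCoeff (R := ℚ))]
  rw [this, Matrix.det_one]


/-- `t · d/dt (log det(1 - tA)) = -∑_{k≥1} Tr(Aᵏ) tᵏ` in `ℚ[[t]]`, i.e.
`t · (det(1 - tA))' / det(1 - tA) = -∑_{k≥1} Tr(Aᵏ) tᵏ`, where the quotient by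
the unit `det(1 - tA)` is expressed via `Ring.inverse`. -/
theorem log_det_derivative (m : ℕ) (A : Matrix (Fin m) (Fin m) ℚ)
    (D : PowerSeries ℚ)
    (hD : D = Matrix.det ((1 : Matrix (Fin m) (Fin m) (PowerSeries ℚ)) -
        (PowerSeries.X : PowerSeries ℚ) • A.map (PowerSeries.C (R := ℚ)))) :
    (PowerSeries.X : PowerSeries ℚ) * (PowerSeries.derivative ℚ D) * Ring.inverse D =
      -(PowerSeries.mk fun k => if k = 0 then 0 else Matrix.trace (A ^ k)) := by
  have hUnit : IsUnit D := by
    rw [PowerSeries.isUnit_iff_constantCoeff, hD, constCoeff_det]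
    exact isUnit_one
  have hder : PowerSeries.derivative ℚ D =
      -(D * Matrix.trace (Smat A * A.map (PowerSeries.C (R := ℚ)))) := by
    rw [hD, deriv_D, adjugate_eq, Matrix.smul_mul, Matrix.trace_smul, smul_eq_mul]
  have key : (PowerSeries.X : PowerSeries ℚ) * (PowerSeries.derivative ℚ D) =
      -(D * PowerSeries.mk fun k => if k = 0 then 0 else Matrix.trace (A ^ k)) := by
    rw [hder, ← trace_eq]
    ring
  rw [key, neg_mul, mul_comm D, mul_assoc, Ring.mul_inverse_cancel D hUnit, mul_one]
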